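/- arXiv:math/0201209 — 3 statements merged into one kernel-verified Lean document; each statement's English description precedes it below -/
import Mathlib

section
/- Let G ⊆ ℝ̄ⁿ be a domain whose boundary ∂G (in ℝ̄ⁿ) contains at least two points. Then for all x, y ∈ G, ρ_G(x,y) ≤ (arcosh 3 / log 3) · δ_G(x,y). -/
open OnePoint

noncomputable section

/-- Inverse hyperbolic cosine: arcosh t = log (t + √(t² − 1)). -/
def arcosh (t : ℝ) : ℝ := Real.log (t + Real.sqrt (t ^ 2 - 1))

/-- Euclidean n-space. -/
abbrev En (n : ℕ) : Type := EuclideanSpace ℝ (Fin n)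

/-- The chordal (spherical) metric on the one-point compactification ℝ̄ⁿ of ℝⁿ. -/
def chordal {n : ℕ} : OnePoint (En n) → OnePoint (En n) → ℝ
  | ∞, ∞ => 0
  | ∞, (y : En n) => 1 / Real.sqrt (1 + ‖y‖ ^ 2)
  | (x : En n), ∞ => 1 / Real.sqrt (1 + ‖x‖ ^ 2)
  | (x : En n), (y : En n) => ‖x - y‖ / (Real.sqrt (1 + ‖x‖ ^ 2) * Real.sqrt (1 + ‖y‖ ^ 2))

/-- The cross-ratio |a,b,c,d| = q(a,c)q(b,d)/(q(a,b)q(c,d)) in the chordal metric. -/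
def crossRatio {n : ℕ} (a b c d : OnePoint (En n)) : ℝ :=
  chordal a c * chordal b d / (chordal a b * chordal c d)

/-- The generalized hyperbolic metric ρ_G(x,y) = sup_{a,b ∈ ∂G} arcosh(1 + |a,x,b,y||a,y,b,x|/2). -/
def rho {n : ℕ} (G : Set (OnePoint (En n))) (x y : OnePoint (En n)) : ℝ :=
  sSup {r : ℝ | ∃ a ∈ frontier G, ∃ b ∈ frontier G,
    r = arcosh (1 + crossRatio a x b y * crossRatio a y b x / 2)}

/-- Seittenranta's metric δ_G(x,y) = sup_{a,b ∈ ∂G} log(1 + |a,x,b,y|). -/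
def seittenranta {n : ℕ} (G : Set (OnePoint (En n))) (x y : OnePoint (En n)) : ℝ :=
  sSup {r : ℝ | ∃ a ∈ frontier G, ∃ b ∈ frontier G,
    r = Real.log (1 + crossRatio a x b y)}

/-- The j-metric j_G(x,y) = log(1 + |x−y|/min(d(x,∂G), d(y,∂G))). -/
def jMetric {n : ℕ} (G : Set (En n)) (x y : En n) : ℝ :=
  Real.log (1 + ‖x - y‖ / min (Metric.infDist x (frontier G)) (Metric.infDist y (frontier G)))

/-- The metric δ_G^p(x,y) = sup_{a,b ∈ ∂G} log(1 + (|x,a,y,b|^p + |x,b,y,a|^p)^(1/p)). -/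
def deltaP {n : ℕ} (p : ℝ) (G : Set (OnePoint (En n))) (x y : OnePoint (En n)) : ℝ :=
  sSup {r : ℝ | ∃ a ∈ frontier G, ∃ b ∈ frontier G,
    r = Real.log (1 + (crossRatio x a y b ^ p + crossRatio x b y a ^ p) ^ (1 / p))}

/-- The metric j_G^p(x,y) = sup_{a ∈ ∂G} log(1 + (|x−y|^p/|x−a|^p + |x−y|^p/|y−a|^p)^(1/p)). -/
def jP {n : ℕ} (p : ℝ) (G : Set (En n)) (x y : En n) : ℝ :=
  sSup {r : ℝ | ∃ a ∈ frontier G,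
    r = Real.log (1 + (‖x - y‖ ^ p / ‖x - a‖ ^ p + ‖x - y‖ ^ p / ‖y - a‖ ^ p) ^ (1 / p))}


section Aux

lemma sq_pos {n : ℕ} (x : En n) : (0:ℝ) < Real.sqrt (1 + ‖x‖ ^ 2) := Real.sqrt_pos.2 (by positivity)


lemma chordal_nonneg {n : ℕ} (p q : OnePoint (En n)) : 0 ≤ chordal p q := by
  cases p <;> cases q <;> simp [chordal] <;> positivity

lemma chordal_comm {n : ℕ} (p q : OnePoint (En n)) : chordal p q = chordal q p := by
  cases p <;> cases q <;> simp [chordal, norm_sub_rev, mul_comm]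

lemma chordal_pos {n : ℕ} {p q : OnePoint (En n)} (h : p ≠ q) : 0 < chordal p q := by
  cases p with
  | infty => cases q with
    | infty => exact absurd rfl h
    | coe y => simp only [chordal]; positivity
  | coe x => cases q with
    | infty => simp only [chordal]; positivity
    | coe y =>
      simp only [chordal]
      have hxy : x ≠ y := fun hxy => h (by rw [hxy])
      have h2 : 0 < ‖x - y‖ := norm_sub_pos_iff.2 hxy
      positivity

lemma euclid_ptolemy {n : ℕ} (a b c d : En n) :
    ‖a - c‖ * ‖b - d‖ ≤ ‖a - b‖ * ‖c - d‖ + ‖a - d‖ * ‖b - c‖ := by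
  have h := EuclideanGeometry.mul_dist_le_mul_dist_add_mul_dist a b c d
  simp only [dist_eq_norm] at h
  calc ‖a - c‖ * ‖b - d‖ ≤ ‖a - b‖ * ‖c - d‖ + ‖b - c‖ * ‖a - d‖ := h
    _ = ‖a - b‖ * ‖c - d‖ + ‖a - d‖ * ‖b - c‖ := by ring

lemma tri' {n : ℕ} (a b c : En n) : ‖a - c‖ ≤ ‖a - b‖ + ‖b - c‖ := by
  simpa [dist_eq_norm] using dist_triangle a b c

lemma chordal_ptolemy {n : ℕ} (p1 p2 p3 p4 : OnePoint (En n)) :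
    chordal p1 p3 * chordal p2 p4 ≤ chordal p1 p2 * chordal p3 p4 + chordal p1 p4 * chordal p2 p3 := by
  cases p1 with
  | infty => cases p2 with
    | infty => cases p3 with
      | infty => cases p4 <;> simp [chordal] <;> positivity
      | coe c => cases p4 with
        | infty => simp [chordal]
        | coe d =>
          simp only [chordal, zero_mul, mul_zero, add_zero, zero_add, one_div]
          rw [mul_comm]
    | coe b => cases p3 with
      | infty => cases p4 with
        | infty => simp [chordal]
        | coe d => simp [chordal]; positivity
      | coe c => cases p4 with
        | infty =>
          simp only [chordal, zero_mul, mul_zero, add_zero, zero_add, one_div]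
          rw [mul_comm]
        | coe d =>
          simp only [chordal, div_mul_div_comm, mul_one, one_mul]
          rw [show Real.sqrt (1+‖b‖^2) * (Real.sqrt (1+‖c‖^2) * Real.sqrt (1+‖d‖^2))
              = Real.sqrt (1+‖c‖^2) * (Real.sqrt (1+‖b‖^2) * Real.sqrt (1+‖d‖^2)) by ring,
            show Real.sqrt (1+‖d‖^2) * (Real.sqrt (1+‖b‖^2) * Real.sqrt (1+‖c‖^2))
              = Real.sqrt (1+‖c‖^2) * (Real.sqrt (1+‖b‖^2) * Real.sqrt (1+‖d‖^2)) by ring,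
            ← add_div]
          gcongr
          have h := tri' b c d
          have h2 : ‖b - c‖ = ‖c - b‖ := norm_sub_rev _ _
          linarith
  | coe a => cases p2 with
    | infty => cases p3 with
      | infty => cases p4 <;> simp [chordal] <;> positivity
      | coe c => cases p4 with
        | infty => simp [chordal]; positivity
        | coe d =>
          simp only [chordal, div_mul_div_comm, mul_one, one_mul]
          rw [show Real.sqrt (1+‖a‖^2) * (Real.sqrt (1+‖c‖^2) * Real.sqrt (1+‖d‖^2))
              = Real.sqrt (1+‖a‖^2) * Real.sqrt (1+‖c‖^2) * Real.sqrt (1+‖d‖^2) by ring,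
            show Real.sqrt (1+‖a‖^2) * Real.sqrt (1+‖d‖^2) * Real.sqrt (1+‖c‖^2)
              = Real.sqrt (1+‖a‖^2) * Real.sqrt (1+‖c‖^2) * Real.sqrt (1+‖d‖^2) by ring,
            ← add_div]
          gcongr
          have h := tri' a d c
          have h2 : ‖d - c‖ = ‖c - d‖ := norm_sub_rev _ _
          linarith
    | coe b => cases p3 with
      | infty => cases p4 with
        | infty => simp [chordal]
        | coe d =>
          simp only [chordal, div_mul_div_comm, mul_one, one_mul]
          rw [show Real.sqrt (1+‖a‖^2) * Real.sqrt (1+‖b‖^2) * Real.sqrt (1+‖d‖^2)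
              = Real.sqrt (1+‖a‖^2) * (Real.sqrt (1+‖b‖^2) * Real.sqrt (1+‖d‖^2)) by ring,
            show Real.sqrt (1+‖a‖^2) * Real.sqrt (1+‖d‖^2) * Real.sqrt (1+‖b‖^2)
              = Real.sqrt (1+‖a‖^2) * (Real.sqrt (1+‖b‖^2) * Real.sqrt (1+‖d‖^2)) by ring,
            ← add_div]
          gcongr
          have h := tri' b a d
          have h2 : ‖b - a‖ = ‖a - b‖ := norm_sub_rev _ _
          linarith
      | coe c => cases p4 with
        | infty =>
          simp only [chordal, div_mul_div_comm, mul_one, one_mul]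
          rw [show Real.sqrt (1+‖a‖^2) * Real.sqrt (1+‖c‖^2) * Real.sqrt (1+‖b‖^2)
              = Real.sqrt (1+‖a‖^2) * Real.sqrt (1+‖b‖^2) * Real.sqrt (1+‖c‖^2) by ring,
            show Real.sqrt (1+‖a‖^2) * (Real.sqrt (1+‖b‖^2) * Real.sqrt (1+‖c‖^2))
              = Real.sqrt (1+‖a‖^2) * Real.sqrt (1+‖b‖^2) * Real.sqrt (1+‖c‖^2) by ring,
            ← add_div]
          gcongr
          exact tri' a b c
        | coe d =>
          simp only [chordal, div_mul_div_comm]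
          rw [show Real.sqrt (1+‖a‖^2) * Real.sqrt (1+‖b‖^2) * (Real.sqrt (1+‖c‖^2) * Real.sqrt (1+‖d‖^2))
              = Real.sqrt (1+‖a‖^2) * Real.sqrt (1+‖c‖^2) * (Real.sqrt (1+‖b‖^2) * Real.sqrt (1+‖d‖^2)) by ring,
            show Real.sqrt (1+‖a‖^2) * Real.sqrt (1+‖d‖^2) * (Real.sqrt (1+‖b‖^2) * Real.sqrt (1+‖c‖^2))
              = Real.sqrt (1+‖a‖^2) * Real.sqrt (1+‖c‖^2) * (Real.sqrt (1+‖b‖^2) * Real.sqrt (1+‖d‖^2)) by ring,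
            ← add_div]
          gcongr
          exact euclid_ptolemy a b c d

lemma arcosh_nonneg {t : ℝ} (ht : 1 ≤ t) : 0 ≤ arcosh t :=
  Real.log_nonneg (le_add_of_le_of_nonneg ht (Real.sqrt_nonneg _))

lemma log_le_arcosh_s1 {t : ℝ} (ht : 1 ≤ t) : Real.log t ≤ arcosh t :=
  Real.log_le_log (by linarith) (le_add_of_le_of_nonneg le_rfl (Real.sqrt_nonneg _))

lemma arcosh_mono {s t : ℝ} (hs : 1 ≤ s) (hst : s ≤ t) : arcosh s ≤ arcosh t := by
  apply Real.log_le_log (by linarith [Real.sqrt_nonneg (s^2-1)])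
  have : Real.sqrt (s^2-1) ≤ Real.sqrt (t^2-1) := Real.sqrt_le_sqrt (by nlinarith)
  linarith

lemma arcosh_one : arcosh 1 = 0 := by
  simp [arcosh]

lemma arcosh_three : arcosh 3 = Real.log (3 + 2 * Real.sqrt 2) := by
  unfold arcosh
  rw [show ((3:ℝ)^2 - 1) = (2*Real.sqrt 2)^2 by
      rw [mul_pow, Real.sq_sqrt (by norm_num : (0:ℝ) ≤ 2)]; norm_num,
    Real.sqrt_sq (by positivity)]

lemma log_three_lt : Real.log 3 < 1.1931471808 := by
  have h2 : Real.log 3 = Real.log 2 + Real.log (3/2) := by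
    rw [← Real.log_mul (by norm_num) (by norm_num)]; norm_num
  have h3 : Real.log (3/2) ≤ 3/2 - 1 := Real.log_le_sub_one_of_pos (by norm_num)
  have := Real.log_two_lt_d9
  rw [h2]; linarith

lemma one_lt_log_three : 1 < Real.log 3 := by
  rw [Real.lt_log_iff_exp_lt (by norm_num)]
  calc Real.exp 1 < 2.7182818286 := Real.exp_one_lt_d9
    _ < 3 := by norm_num

lemma log_three_pos : 0 < Real.log 3 := lt_trans one_pos one_lt_log_three

lemma arcosh_three_gt : 1.3862943606 < arcosh 3 := by
  rw [arcosh_three]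
  have h4 : Real.log 4 ≤ Real.log (3 + 2*Real.sqrt 2) := by
    apply Real.log_le_log (by norm_num)
    have : (1:ℝ) ≤ Real.sqrt 2 := Real.one_le_sqrt.2 (by norm_num)
    linarith
  have : Real.log 4 = 2 * Real.log 2 := by
    rw [show (4:ℝ) = 2^2 by norm_num, Real.log_pow]; push_cast; ring
  have := Real.log_two_gt_d9
  linarith

lemma arcosh_three_lt_two_log_three : arcosh 3 < 2 * Real.log 3 := by
  rw [arcosh_three, show 2 * Real.log 3 = Real.log 9 by
    rw [show (9:ℝ) = 3^2 by norm_num, Real.log_pow]; push_cast; ring]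
  apply Real.log_lt_log (by positivity)
  have : Real.sqrt 2 < 3/2 := by
    rw [show (3/2 : ℝ) = Real.sqrt ((3/2)^2) from (Real.sqrt_sq (by norm_num)).symm]
    apply Real.sqrt_lt_sqrt (by norm_num) (by norm_num)
  linarith

def Kc : ℝ := arcosh 3 / Real.log 3

lemma Kc_gt : 1.16 < Kc := by
  rw [Kc, lt_div_iff₀ log_three_pos]
  nlinarith [log_three_lt, arcosh_three_gt]

lemma Kc_lt_two : Kc < 2 := by
  rw [Kc, div_lt_iff₀ log_three_pos]
  linarith [arcosh_three_lt_two_log_three]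

lemma Kc_pos : 0 < Kc := by linarith [Kc_gt]

lemma Kc_mul_log_three : Kc * Real.log 3 = arcosh 3 :=
  div_mul_cancel₀ _ (ne_of_gt log_three_pos)

lemma Kc_sq : 9/8 < Kc^2 := by nlinarith [Kc_gt]
lemma Kc_def : Kc = arcosh 3 / Real.log 3 := rfl

lemma hasDerivAt_arcosh {z : ℝ} (hz : 1 < z) :
    HasDerivAt arcosh (1 / Real.sqrt (z^2 - 1)) z := by
  have h1 : HasDerivAt (fun t : ℝ => t^2 - 1) (2*z) z := by
    simpa using (hasDerivAt_pow 2 z).sub_const 1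
  have hupos : 0 < z^2 - 1 := by nlinarith
  have h2 := h1.sqrt (ne_of_gt hupos)
  have h3 := (hasDerivAt_id z).add h2
  have hw : 0 < Real.sqrt (z^2-1) := Real.sqrt_pos.2 hupos
  have hne : z + Real.sqrt (z^2-1) ≠ 0 := by nlinarith
  have h4 := h3.log hne
  have heq : (1 + 2*z/(2*Real.sqrt (z^2-1))) / (z + Real.sqrt (z^2-1))
      = 1/Real.sqrt (z^2-1) := by
    field_simp
    ring
  rw [← heq]
  exact h4

lemma hasDerivAt_KLog {z : ℝ} (hz : 0 < z) :
    HasDerivAt (fun m : ℝ => Kc * Real.log (1+m)) (Kc / (1+z)) z := by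
  have h : HasDerivAt (fun m : ℝ => Real.log (1+m)) (1/(1+z)) z := by
    simpa using (((hasDerivAt_id z).const_add 1).log (by linarith : (1:ℝ)+z ≠ 0))
  have h2 := h.const_mul Kc
  exact h2.congr_deriv (by ring)

set_option maxHeartbeats 1000000 in
lemma caseB {m : ℝ} (hm : 2 ≤ m) : arcosh (1+m) ≤ Kc * Real.log (1+m) := by
  set F : ℝ → ℝ := fun t => Kc * Real.log (1+t) - arcosh (1+t) with hF
  have hder : ∀ z ∈ interior (Set.Ici (2:ℝ)),
      HasDerivAt F (Kc/(1+z) - 1/Real.sqrt ((1+z)^2-1)) z := by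
    intro z hz
    rw [interior_Ici] at hz
    have hz2 : (2:ℝ) < z := hz
    have h1 := hasDerivAt_KLog (by linarith : (0:ℝ) < z)
    have h2 : HasDerivAt (fun t : ℝ => arcosh (1+t)) (1/Real.sqrt ((1+z)^2-1)) z := by
      have ha := (hasDerivAt_arcosh (show (1:ℝ) < 1+z by linarith)).comp z
        ((hasDerivAt_id z).const_add 1)
      exact ha.congr_deriv (by simp)
    exact h1.sub h2
  have hcont : ContinuousOn F (Set.Ici 2) := by
    apply ContinuousOn.sub
    · apply continuousOn_const.mul
      apply ContinuousOn.log (by fun_prop)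
      intro z hz; simp only [Set.mem_Ici] at hz; nlinarith
    · show ContinuousOn (fun t : ℝ => Real.log ((1+t) + Real.sqrt ((1+t)^2 - 1))) (Set.Ici 2)
      apply ContinuousOn.log
      · exact (by fun_prop : ContinuousOn (fun t : ℝ => (1+t)) _).add
          ((Real.continuous_sqrt.comp (by fun_prop)).continuousOn)
      · intro z hz; simp only [Set.mem_Ici] at hz
        have := Real.sqrt_nonneg ((1+z)^2-1); nlinarith
  have hmono : MonotoneOn F (Set.Ici 2) := by
    apply monotoneOn_of_deriv_nonneg (convex_Ici 2) hcont
    · intro z hz; exact ((hder z hz).differentiableAt).differentiableWithinAt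
    · intro z hz
      rw [(hder z hz).deriv]
      rw [interior_Ici] at hz
      have hz2 : (2:ℝ) < z := hz
      set w := Real.sqrt ((1+z)^2-1) with hwdef
      have hwpos : 0 < w := Real.sqrt_pos.2 (by nlinarith [hz2])
      have hw2 : w^2 = (1+z)^2-1 := Real.sq_sqrt (by nlinarith [hz2])
      rw [sub_nonneg, div_le_div_iff₀ hwpos (by linarith : (0:ℝ) < 1+z)]
      have hsum : 0 < Kc*w + (1+z) := by
        have := mul_pos Kc_pos hwpos
        linarith
      have hKw : Kc^2*w^2 = Kc^2*((1+z)^2-1) := by rw [hw2]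
      have hprod : (0:ℝ) ≤ (Kc^2 - 1) * ((1+z)^2 - 9) :=
        mul_nonneg (by nlinarith [Kc_sq]) (by nlinarith [hz2])
      nlinarith [hKw, hsum, hprod, Kc_sq]
  have h2m : F 2 ≤ F m := hmono (Set.mem_Ici.2 le_rfl) (Set.mem_Ici.2 hm) hm
  have hF2 : F 2 = 0 := by
    simp only [hF]
    rw [show (1:ℝ)+2 = 3 by norm_num, Kc_mul_log_three]
    ring
  have : 0 ≤ F m := by linarith
  simp only [hF] at this
  linarith

set_option maxHeartbeats 2000000 in
lemma caseA {m : ℝ} (h0 : 0 ≤ m) (h2 : m ≤ 2) :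
    arcosh (1+m^2/2) ≤ Kc * Real.log (1+m) := by
  set a : ℝ := Kc^2/4 - 1 with ha
  set c : ℝ := Kc^2 - 1 with hc
  have halt : a < 0 := by rw [ha]; nlinarith [Kc_lt_two, Kc_pos]
  have hcpos : 0 < c := by rw [hc]; nlinarith [Kc_gt]
  have hd : 1 < 1 - a*c := by nlinarith [mul_pos (neg_pos.2 halt) hcpos]
  set ms : ℝ := (1 - Real.sqrt (1 - a*c))/a with hms
  have hsq : Real.sqrt (1-a*c)^2 = 1-a*c := Real.sq_sqrt (by linarith)
  have hsg : 1 < Real.sqrt (1-a*c) := by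
    have := Real.lt_sqrt (y := 1) (show (0:ℝ) ≤ 1 - a*c by linarith)
    exact (Real.lt_sqrt (by linarith)).2 (by nlinarith)
  have hmspos : 0 < ms := by
    rw [hms]
    exact div_pos_of_neg_of_neg (by linarith) halt
  have hpsi_ms : a*ms^2 - 2*ms + c = 0 := by
    have h1 : a*ms = 1 - Real.sqrt (1-a*c) := by
      rw [hms, mul_comm]
      exact div_mul_cancel₀ _ (ne_of_lt halt)
    have hq : (a*ms - 1)^2 = 1 - a*c := by
      rw [h1]; linear_combination hsq
    have h3 : a*(a*ms^2 - 2*ms + c) = 0 := by linear_combination hq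
    rcases mul_eq_zero.1 h3 with h | h
    · exact absurd h (ne_of_lt halt)
    · exact h
  have hms2 : ms < 2 := by
    by_contra hge
    push_neg at hge
    have h4 : (a*2^2 - 2*2 + c) * ms = (ms - 2)*(c - a*2*ms) := by
      linear_combination (2:ℝ) * hpsi_ms
    have h5 : 0 < c - a*2*ms := by nlinarith
    have h6 : a*2^2-2*2+c < 0 := by rw [ha, hc]; nlinarith [Kc_lt_two, Kc_pos]
    nlinarith
  have psi_nonneg : ∀ z : ℝ, 0 ≤ z → z ≤ ms → 0 ≤ a*z^2 - 2*z + c := by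
    intro z h1z h2z
    have h4 : (a*z^2 - 2*z + c) * ms = (ms - z)*(c - a*z*ms) := by
      linear_combination z * hpsi_ms
    have h5 : 0 ≤ (ms - z)*(c - a*z*ms) := by
      apply mul_nonneg (by linarith)
      nlinarith [mul_nonneg (mul_nonneg h1z hmspos.le) (neg_nonneg.2 halt.le)]
    nlinarith
  have psi_nonpos : ∀ z : ℝ, ms ≤ z → a*z^2 - 2*z + c ≤ 0 := by
    intro z h1z
    have h4 : (a*z^2 - 2*z + c) * ms = (ms - z)*(c - a*z*ms) := by
      linear_combination z * hpsi_ms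
    have hz0 : 0 < z := lt_of_lt_of_le hmspos h1z
    have h5 : (ms - z)*(c - a*z*ms) ≤ 0 := by
      apply mul_nonpos_of_nonpos_of_nonneg (by linarith)
      nlinarith [mul_pos (mul_pos hz0 hmspos) (neg_pos.2 halt)]
    nlinarith
  set φ : ℝ → ℝ := fun t => Kc * Real.log (1+t) - arcosh (1+t^2/2) with hφ
  have hder : ∀ z : ℝ, 0 < z →
      HasDerivAt φ (Kc/(1+z) - z / Real.sqrt ((1+z^2/2)^2 - 1)) z := by
    intro z hz
    have h1 := hasDerivAt_KLog hz
    have hf : HasDerivAt (fun t : ℝ => 1 + t^2/2) z z := by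
      have h := ((hasDerivAt_pow 2 z).div_const 2).const_add 1
      norm_num at h
      exact h.const_add 1
    have ht : (1:ℝ) < 1 + z^2/2 := by nlinarith
    have ha2 := (hasDerivAt_arcosh ht).comp z hf
    have h2 : HasDerivAt (fun t : ℝ => arcosh (1+t^2/2))
        (z / Real.sqrt ((1+z^2/2)^2-1)) z := by
      have : 1 / Real.sqrt ((1+z^2/2)^2-1) * z = z / Real.sqrt ((1+z^2/2)^2-1) := by
        ring
      rw [← this]
      exact ha2
    exact h1.sub h2
  have hcont0 : ContinuousOn φ (Set.Ici 0) := by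
    apply ContinuousOn.sub
    · apply continuousOn_const.mul
      apply ContinuousOn.log (by fun_prop)
      intro z hz; simp only [Set.mem_Ici] at hz; nlinarith
    · show ContinuousOn (fun t : ℝ => Real.log ((1+t^2/2) + Real.sqrt ((1+t^2/2)^2 - 1)))
        (Set.Ici 0)
      apply ContinuousOn.log
      · exact (by fun_prop : ContinuousOn (fun t : ℝ => (1+t^2/2)) _).add
          ((Real.continuous_sqrt.comp (by fun_prop)).continuousOn)
      · intro z hz
        have := Real.sqrt_nonneg ((1+z^2/2)^2-1); nlinarith [sq_nonneg z]
  have derivsign : ∀ z : ℝ, 0 < z → (0 ≤ a*z^2-2*z+c → 0 ≤ Kc/(1+z) - z / Real.sqrt ((1+z^2/2)^2 - 1))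
      ∧ (a*z^2-2*z+c ≤ 0 → Kc/(1+z) - z / Real.sqrt ((1+z^2/2)^2 - 1) ≤ 0) := by
    intro z hz
    set w := Real.sqrt ((1+z^2/2)^2 - 1) with hwdef
    have hwpos : 0 < w := Real.sqrt_pos.2 (by nlinarith [sq_nonneg z, mul_pos hz hz])
    have hw2 : w^2 = (1+z^2/2)^2-1 := Real.sq_sqrt (by nlinarith)
    have hsum : 0 < Kc*w + z*(1+z) := by
      have h1 := mul_pos Kc_pos hwpos
      have h2 := mul_pos hz (show (0:ℝ) < 1+z by linarith)
      linarith
    have hKw : Kc^2*w^2 - (z*(1+z))^2 = z^2*(a*z^2 - 2*z + c) := by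
      rw [hw2, ha, hc]; ring
    constructor
    · intro hps
      rw [sub_nonneg, div_le_div_iff₀ hwpos (by linarith : (0:ℝ) < 1+z)]
      nlinarith [hsum, hKw, mul_nonneg (sq_nonneg z) hps]
    · intro hps
      rw [sub_nonpos, div_le_div_iff₀ (by linarith : (0:ℝ) < 1+z) hwpos]
      nlinarith [hsum, hKw, mul_nonpos_of_nonneg_of_nonpos (sq_nonneg z) hps]
  have mono1 : MonotoneOn φ (Set.Icc 0 ms) := by
    apply monotoneOn_of_deriv_nonneg (convex_Icc 0 ms)
      (hcont0.mono Set.Icc_subset_Ici_self)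
    · intro z hz; rw [interior_Icc] at hz
      exact ((hder z hz.1).differentiableAt).differentiableWithinAt
    · intro z hz; rw [interior_Icc] at hz
      rw [(hder z hz.1).deriv]
      exact (derivsign z hz.1).1 (psi_nonneg z hz.1.le hz.2.le)
  have mono2 : AntitoneOn φ (Set.Icc ms 2) := by
    apply antitoneOn_of_deriv_nonpos (convex_Icc ms 2)
      (hcont0.mono ((Set.Icc_subset_Icc_left hmspos.le).trans Set.Icc_subset_Ici_self))
    · intro z hz; rw [interior_Icc] at hz
      exact ((hder z (lt_trans hmspos hz.1)).differentiableAt).differentiableWithinAt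
    · intro z hz; rw [interior_Icc] at hz
      rw [(hder z (lt_trans hmspos hz.1)).deriv]
      exact (derivsign z (lt_trans hmspos hz.1)).2 (psi_nonpos z hz.1.le)
  have hφ0 : φ 0 = 0 := by
    simp only [hφ]
    norm_num [arcosh_one]
  have hφ2 : φ 2 = 0 := by
    simp only [hφ]
    rw [show (1:ℝ)+2^2/2 = 3 by norm_num, show (1:ℝ)+2 = 3 by norm_num, Kc_mul_log_three]
    ring
  have key : 0 ≤ φ m := by
    rcases le_total m ms with hcase | hcase
    · have := mono1 (Set.mem_Icc.2 ⟨le_rfl, hmspos.le⟩) (Set.mem_Icc.2 ⟨h0, hcase⟩) h0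
      linarith [hφ0]
    · have := mono2 (Set.mem_Icc.2 ⟨hcase, h2⟩) (Set.mem_Icc.2 ⟨hms2.le, le_rfl⟩) h2
      linarith [hφ2]
  simp only [hφ] at key
  linarith
lemma crossRatio_nonneg {n : ℕ} (a b c d : OnePoint (En n)) : 0 ≤ crossRatio a b c d :=
  div_nonneg (mul_nonneg (chordal_nonneg _ _) (chordal_nonneg _ _))
    (mul_nonneg (chordal_nonneg _ _) (chordal_nonneg _ _))

lemma cross_swap {n : ℕ} (a b x y : OnePoint (En n)) :
    crossRatio b x a y = crossRatio a y b x := by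
  unfold crossRatio
  rw [chordal_comm b a, chordal_comm x y, mul_comm (chordal b x) (chordal a y)]

lemma frontier_ne {n : ℕ} {G : Set (OnePoint (En n))} (hopen : IsOpen G)
    {p q : OnePoint (En n)} (hp : p ∈ frontier G) (hq : q ∈ G) : p ≠ q := by
  intro h
  have h2 := hopen.inter_frontier_eq
  have h3 : p ∈ G ∩ frontier G := ⟨h ▸ hq, hp⟩
  rw [h2] at h3
  exact h3

variable {n : ℕ} {G : Set (OnePoint (En n))} {x y a b : OnePoint (En n)}

lemma cross_mul_le_add (hopen : IsOpen G) (hx : x ∈ G) (hy : y ∈ G)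
    (ha : a ∈ frontier G) (hb : b ∈ frontier G) :
    crossRatio a x b y * crossRatio a y b x ≤ crossRatio a x b y + crossRatio a y b x := by
  set N := chordal a b * chordal x y with hN
  set D1 := chordal a x * chordal b y with hD1
  set D2 := chordal a y * chordal b x with hD2
  have hD1p : 0 < D1 := mul_pos (chordal_pos (frontier_ne hopen ha hx))
    (chordal_pos (frontier_ne hopen hb hy))
  have hD2p : 0 < D2 := mul_pos (chordal_pos (frontier_ne hopen ha hy))
    (chordal_pos (frontier_ne hopen hb hx))
  have hNn : 0 ≤ N := mul_nonneg (chordal_nonneg _ _) (chordal_nonneg _ _)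
  have hpt : N ≤ D1 + D2 := by
    have h := chordal_ptolemy a x b y
    rw [chordal_comm x b] at h
    rw [hN, hD1, hD2]
    linarith [h]
  have e1 : crossRatio a x b y = N / D1 := rfl
  have e2 : crossRatio a y b x = N / D2 := by
    unfold crossRatio
    rw [chordal_comm y x, hN, hD2]
  rw [e1, e2, div_mul_div_comm, div_add_div _ _ (ne_of_gt hD1p) (ne_of_gt hD2p),
    div_le_div_iff₀ (mul_pos hD1p hD2p) (mul_pos hD1p hD2p)]
  nlinarith [mul_le_mul_of_nonneg_right hpt (mul_nonneg hNn (mul_pos hD1p hD2p).le),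
    mul_pos hD1p hD2p]

lemma cross_lower (hopen : IsOpen G) (hx : x ∈ G) (hy : y ∈ G)
    (ha : a ∈ frontier G) (hb : b ∈ frontier G) (h1 : 1 ≤ crossRatio a x b y) :
    crossRatio a x b y - 1 ≤ crossRatio a x b y * crossRatio a y b x := by
  set N := chordal a b * chordal x y with hN
  set D1 := chordal a x * chordal b y with hD1
  set D2 := chordal a y * chordal b x with hD2
  have hD1p : 0 < D1 := mul_pos (chordal_pos (frontier_ne hopen ha hx))
    (chordal_pos (frontier_ne hopen hb hy))
  have hD2p : 0 < D2 := mul_pos (chordal_pos (frontier_ne hopen ha hy))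
    (chordal_pos (frontier_ne hopen hb hx))
  have hpt2 : D2 ≤ N + D1 := by
    have h := chordal_ptolemy a b y x
    rw [chordal_comm y x] at h
    rw [hN, hD1, hD2]
    linarith [h]
  have e1 : crossRatio a x b y = N / D1 := rfl
  have e2 : crossRatio a y b x = N / D2 := by
    unfold crossRatio
    rw [chordal_comm y x, hN, hD2]
  rw [e1] at h1
  have hD1N : D1 ≤ N := (one_le_div hD1p).1 h1
  rw [e1, e2, div_mul_div_comm]
  have e3 : N / D1 - 1 = (N - D1)/D1 := by field_simp
  rw [e3, div_le_div_iff₀ hD1p (mul_pos hD1p hD2p)]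
  nlinarith [mul_le_mul_of_nonneg_left hpt2 (sub_nonneg.2 hD1N), hD1p.le, hD2p.le,
    mul_le_mul_of_nonneg_right (mul_le_mul_of_nonneg_left hpt2 (sub_nonneg.2 hD1N)) hD1p.le,
    pow_pos hD1p 3, mul_nonneg (mul_nonneg hD1p.le hD1p.le) hD1p.le]

lemma key_combine {c c' : ℝ} (hc : 0 ≤ c) (hc' : 0 ≤ c') (hpt : c*c' ≤ c+c') {δ : ℝ}
    (h1 : Real.log (1+c) ≤ δ) (h2 : Real.log (1+c') ≤ δ) :
    arcosh (1 + c*c'/2) ≤ Kc * δ := by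
  set m := max c c' with hm
  have hcm : c ≤ m := le_max_left c c'
  have hcm' : c' ≤ m := le_max_right c c'
  have hm0 : 0 ≤ m := le_trans hc hcm
  have hlm : Real.log (1+m) ≤ δ := by
    rcases max_cases c c' with ⟨he, _⟩ | ⟨he, _⟩ <;> rw [hm, he]
    exacts [h1, h2]
  have hccn : 0 ≤ c*c' := mul_nonneg hc hc'
  have harc : arcosh (1 + c*c'/2) ≤ Kc * Real.log (1+m) := by
    rcases le_total m 2 with h | h
    · have hcc : c*c' ≤ m^2 := by nlinarith
      calc arcosh (1+c*c'/2) ≤ arcosh (1+m^2/2) :=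
            arcosh_mono (by linarith) (by linarith)
        _ ≤ Kc * Real.log (1+m) := caseA hm0 h
    · have hcc : c*c' ≤ 2*m := by nlinarith
      calc arcosh (1+c*c'/2) ≤ arcosh (1+m) :=
            arcosh_mono (by linarith) (by linarith)
        _ ≤ Kc * Real.log (1+m) := caseB h
  have := mul_le_mul_of_nonneg_left hlm Kc_pos.le
  linarith


end Aux

/-- ρ_G ≤ (arcosh 3 / log 3) · δ_G for any domain G ⊆ ℝ̄ⁿ with at least two boundary points. -/
theorem rho_le_const_mul_seittenranta (n : ℕ) (hn : 2 ≤ n) (G : Set (OnePoint (En n)))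
    (hopen : IsOpen G) (hconn : IsConnected G) (hbdry : (frontier G).Nontrivial)
    (x y : OnePoint (En n)) (hx : x ∈ G) (hy : y ∈ G) :
    rho G x y ≤ (arcosh 3 / Real.log 3) * seittenranta G x y := by

  rw [← Kc_def]
  unfold rho seittenranta
  set Sd := {r : ℝ | ∃ a ∈ frontier G, ∃ b ∈ frontier G,
    r = Real.log (1 + crossRatio a x b y)} with hSd
  by_cases hbdd : BddAbove Sd
  · apply Real.sSup_le
    · rintro r ⟨a, ha, b, hb, rfl⟩
      have mem1 : Real.log (1 + crossRatio a x b y) ∈ Sd := ⟨a, ha, b, hb, rfl⟩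
      have mem2 : Real.log (1 + crossRatio b x a y) ∈ Sd := ⟨b, hb, a, ha, rfl⟩
      rw [cross_swap] at mem2
      exact key_combine (crossRatio_nonneg _ _ _ _) (crossRatio_nonneg _ _ _ _)
        (cross_mul_le_add hopen hx hy ha hb) (le_csSup hbdd mem1) (le_csSup hbdd mem2)
    · apply mul_nonneg Kc_pos.le
      apply Real.sSup_nonneg
      rintro r ⟨a, ha, b, hb, rfl⟩
      exact Real.log_nonneg (by linarith [crossRatio_nonneg a x b y])
  · have hρ : ¬ BddAbove {r : ℝ | ∃ a ∈ frontier G, ∃ b ∈ frontier G,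
        r = arcosh (1 + crossRatio a x b y * crossRatio a y b x / 2)} := by
      rintro ⟨M, hM⟩
      apply hbdd
      obtain ⟨a₀, ha₀, b₀, hb₀, -⟩ := hbdry
      have hM0 : 0 ≤ M := by
        have hmem : arcosh (1 + crossRatio a₀ x b₀ y * crossRatio a₀ y b₀ x / 2) ∈
            {r : ℝ | ∃ a ∈ frontier G, ∃ b ∈ frontier G,
              r = arcosh (1 + crossRatio a x b y * crossRatio a y b x / 2)} :=
          ⟨a₀, ha₀, b₀, hb₀, rfl⟩
        have h1 := hM hmem
        have h2 : 0 ≤ arcosh (1 + crossRatio a₀ x b₀ y * crossRatio a₀ y b₀ x / 2) :=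
          arcosh_nonneg (by nlinarith [mul_nonneg (crossRatio_nonneg a₀ x b₀ y) (crossRatio_nonneg a₀ y b₀ x)])
        linarith
      refine ⟨Real.log 2 + M, ?_⟩
      rintro r ⟨a, ha, b, hb, rfl⟩
      have hcn := crossRatio_nonneg a x b y
      have hcn' := crossRatio_nonneg a y b x
      rcases le_total (crossRatio a x b y) 1 with h | h
      · have hl : Real.log (1 + crossRatio a x b y) ≤ Real.log 2 :=
          Real.log_le_log (by linarith) (by linarith)
        linarith
      · have hlow := cross_lower hopen hx hy ha hb h
        have hmem : arcosh (1 + crossRatio a x b y * crossRatio a y b x / 2) ∈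
            {r : ℝ | ∃ a ∈ frontier G, ∃ b ∈ frontier G,
              r = arcosh (1 + crossRatio a x b y * crossRatio a y b x / 2)} :=
          ⟨a, ha, b, hb, rfl⟩
        have hMc := hM hmem
        have h1 : arcosh ((1 + crossRatio a x b y)/2)
            ≤ arcosh (1 + crossRatio a x b y * crossRatio a y b x / 2) :=
          arcosh_mono (by linarith) (by linarith)
        have h2 : Real.log ((1 + crossRatio a x b y)/2)
            ≤ arcosh ((1 + crossRatio a x b y)/2) := log_le_arcosh_s1 (by linarith)
        have h3 : Real.log ((1 + crossRatio a x b y)/2)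
            = Real.log (1 + crossRatio a x b y) - Real.log 2 :=
          Real.log_div (by linarith) (by norm_num)
        linarith
    rw [Real.sSup_of_not_bddAbove hρ, Real.sSup_of_not_bddAbove hbdd, mul_zero]

end
end

section
/- Let k ≥ 1 and s ≥ k − 1/k be real numbers. Then log(1 + k·s) ≤ arcosh(1 + s²/2), equivalently log(1 + k·s) ≤ log(1 + s²/2 + √(s⁴/4 + s²)). -/
noncomputable section

/-- If k ≥ 1 and s ≥ k − 1/k then log(1 + k·s) ≤ arcosh(1 + s²/2). -/
theorem log_le_arcosh (k s : ℝ) (hk : 1 ≤ k) (hs : k - 1 / k ≤ s) :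
    Real.log (1 + k * s) ≤ arcosh (1 + s ^ 2 / 2) := by
  have hk0 : 0 < k := lt_of_lt_of_le one_pos hk
  have hs0 : 0 ≤ s := by
    have : 0 ≤ k - 1 / k := by
      rw [sub_nonneg, div_le_iff₀ hk0]
      nlinarith
    linarith
  have hks : k ^ 2 - 1 ≤ k * s := by
    have := (sub_le_iff_le_add.mp hs)
    nlinarith [mul_le_mul_of_nonneg_left hs hk0.le, mul_div_cancel₀ (1:ℝ) hk0.ne']
  have hkey : k * s - s ^ 2 / 2 ≤ Real.sqrt ((1 + s ^ 2 / 2) ^ 2 - 1) := by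
    rcases le_or_gt (k * s - s ^ 2 / 2) 0 with h | h
    · exact h.trans (Real.sqrt_nonneg _)
    · rw [show (1 + s ^ 2 / 2) ^ 2 - 1 = s ^ 2 + (s ^ 2) ^ 2 / 4 by ring]
      rw [Real.le_sqrt' h]
      nlinarith [sq_nonneg s, mul_nonneg (sq_nonneg s) (sub_nonneg.mpr hks)]
  have hpos : 0 < 1 + k * s := by nlinarith [mul_nonneg hk0.le hs0]
  unfold arcosh
  apply Real.log_le_log hpos
  linarith
end
end

section
/- Let x, y ∈ ℝⁿ be nonzero points with |x| ≤ |y| and |x|·|y| ≤ 1. Then arcosh(1 + |x−y|²/(2|x||y|)) ≤ (arcosh 3 / log 2) · log(1 + |x−y|/(|x| + |x||y|)). -/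
noncomputable section

lemma arcosh_eq_two_arsinh (w : ℝ) (hw : 0 ≤ w) :
    arcosh (1 + 2 * w ^ 2) = 2 * Real.arsinh w := by
  have h1 : (0:ℝ) ≤ 1 + w ^ 2 := by positivity
  have hs : Real.sqrt (1 + w ^ 2) ^ 2 = 1 + w ^ 2 := Real.sq_sqrt h1
  have h2 : (1 + 2 * w ^ 2) ^ 2 - 1 = (2 * w * Real.sqrt (1 + w ^ 2)) ^ 2 := by
    have : (2 * w * Real.sqrt (1 + w ^ 2)) ^ 2 = 4 * w ^ 2 * (1 + w ^ 2) := by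
      rw [mul_pow, mul_pow, hs]; ring
    rw [this]; ring
  have h3 : Real.sqrt ((1 + 2 * w ^ 2) ^ 2 - 1) = 2 * w * Real.sqrt (1 + w ^ 2) := by
    rw [h2, Real.sqrt_sq (by positivity)]
  have h4 : (1 : ℝ) + 2 * w ^ 2 + 2 * w * Real.sqrt (1 + w ^ 2)
      = (w + Real.sqrt (1 + w ^ 2)) ^ 2 := by
    have : (w + Real.sqrt (1 + w ^ 2)) ^ 2 = w ^ 2 + 2 * w * Real.sqrt (1 + w ^ 2) + (1 + w ^ 2) := by
      rw [add_sq, hs]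
    rw [this]; ring
  have hpos : 0 < w + Real.sqrt (1 + w ^ 2) := by positivity
  rw [arcosh, h3, h4, Real.arsinh, Real.log_pow]
  push_cast; ring

lemma arsinh_one_eq : Real.arsinh 1 = Real.log (1 + Real.sqrt 2) := by
  rw [Real.arsinh]
  norm_num [add_comm]

lemma arcosh_three_s12 : arcosh 3 = 2 * Real.arsinh 1 := by
  have := arcosh_eq_two_arsinh 1 zero_le_one
  norm_num at this
  convert this using 2 <;> norm_num

lemma sqrt2_bounds : (1.41:ℝ) ≤ Real.sqrt 2 ∧ Real.sqrt 2 ≤ 1.5 := by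
  have h := Real.sq_sqrt (by norm_num : (0:ℝ) ≤ 2)
  have h0 := Real.sqrt_nonneg 2
  constructor <;> nlinarith

lemma A_ge_L : Real.log 2 ≤ Real.arsinh 1 := by
  have h1 : (1:ℝ) ≤ Real.sqrt 2 := by nlinarith [sqrt2_bounds.1]
  rw [Real.arsinh]
  apply Real.log_le_log (by norm_num)
  have : (1:ℝ) + 1^2 = 2 := by norm_num
  rw [this]
  nlinarith

lemma A_le_sqrt2_L : Real.arsinh 1 ≤ Real.sqrt 2 * Real.log 2 := by
  have h1 := sqrt2_bounds.1
  have h2 := sqrt2_bounds.2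
  have hlog2 := Real.log_two_gt_d9
  have hA : Real.arsinh 1 ≤ Real.log 2 + 1/4 := by
    rw [Real.arsinh]
    have : (1:ℝ) + Real.sqrt (1 + 1^2) ≤ 5/2 := by
      have e : (1:ℝ) + 1^2 = 2 := by norm_num
      rw [e]; nlinarith
    calc Real.log (1 + Real.sqrt (1 + 1^2)) ≤ Real.log (5/2) :=
          Real.log_le_log (by positivity) this
      _ = Real.log 2 + Real.log (5/4) := by
          rw [← Real.log_mul (by norm_num) (by norm_num)]; norm_num
      _ ≤ Real.log 2 + 1/4 := by
          have := Real.log_le_sub_one_of_pos (show (0:ℝ) < 5/4 by norm_num)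
          linarith
  nlinarith

lemma key_ineq (w : ℝ) (h0 : 0 ≤ w) (h1 : w ≤ 1) :
    Real.log 2 * Real.arsinh w ≤ Real.arsinh 1 * Real.log (1 + w) := by
  set A := Real.arsinh 1 with hAdef
  set L := Real.log 2 with hLdef
  have hL : 0 < L := Real.log_pos one_lt_two
  have hAL : L ≤ A := A_ge_L
  have hA2 : A ^ 2 ≤ 2 * L ^ 2 := by
    have := A_le_sqrt2_L
    have h2 := Real.sq_sqrt (by norm_num : (0:ℝ) ≤ 2)
    have h0' := Real.sqrt_nonneg 2
    nlinarith
  set F : ℝ → ℝ := fun t => A * Real.log (1 + t) - L * Real.arsinh t with hF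
  have hderiv : ∀ t : ℝ, 0 ≤ t →
      HasDerivAt F (A * (1 + t)⁻¹ - L * (Real.sqrt (1 + t ^ 2))⁻¹) t := by
    intro t ht
    have hlog : HasDerivAt (fun s : ℝ => Real.log (1 + s)) (1 + t)⁻¹ t := by
      have h := (Real.hasDerivAt_log (by linarith : (1:ℝ) + t ≠ 0)).comp t
        ((hasDerivAt_id t).const_add 1)
      simp at h; exact h
    exact (hlog.const_mul A).sub ((Real.hasDerivAt_arsinh t).const_mul L)
  have hderiv' : ∀ t : ℝ, 0 ≤ t →
      deriv F t = A * (1 + t)⁻¹ - L * (Real.sqrt (1 + t ^ 2))⁻¹ :=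
    fun t ht => (hderiv t ht).deriv
  set q : ℝ → ℝ := fun t => A ^ 2 * (1 + t ^ 2) - L ^ 2 * (1 + t) ^ 2 with hq
  have hq1 : q 1 ≤ 0 := by simp only [hq]; nlinarith
  have hq0 : 0 ≤ q 0 := by simp only [hq]; nlinarith
  have hqanti : AntitoneOn q (Set.Icc (0:ℝ) 1) := by
    intro s hs t ht hst
    simp only [Set.mem_Icc] at hs ht
    simp only [hq]
    have hts : (0:ℝ) ≤ t - s := by linarith
    have h2st : (0:ℝ) ≤ 2 - s - t := by linarith
    nlinarith [mul_nonneg (mul_nonneg (sq_nonneg L) hts) h2st,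
      mul_nonneg (mul_nonneg (sub_nonneg.2 hA2) hts) (by linarith : (0:ℝ) ≤ t + s)]
  have hqcont : Continuous q := by
    simp only [hq]
    exact (continuous_const.mul (continuous_const.add (continuous_pow 2))).sub
      (continuous_const.mul ((continuous_const.add continuous_id).pow 2))
  obtain ⟨c, hc01, hqc⟩ : ∃ c ∈ Set.Icc (0:ℝ) 1, q c = 0 := by
    have himg := intermediate_value_Icc' (by norm_num : (0:ℝ) ≤ 1) hqcont.continuousOn
    obtain ⟨c, hc, hcq⟩ := himg ⟨hq1, hq0⟩
    exact ⟨c, hc, hcq⟩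
  have hsign : ∀ t : ℝ, 0 ≤ t → (0 ≤ q t → 0 ≤ deriv F t) ∧ (q t ≤ 0 → deriv F t ≤ 0) := by
    intro t ht
    have h1t : (0:ℝ) < 1 + t := by linarith
    have hst : (0:ℝ) < Real.sqrt (1 + t ^ 2) := Real.sqrt_pos.2 (by positivity)
    have hst2 : Real.sqrt (1 + t ^ 2) ^ 2 = 1 + t ^ 2 := Real.sq_sqrt (by positivity)
    rw [hderiv' t ht]
    constructor
    · intro hqt
      have hnA : 0 ≤ A * Real.sqrt (1 + t ^ 2) := mul_nonneg (hL.le.trans hAL) hst.le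
      have key : L * (1 + t) ≤ A * Real.sqrt (1 + t ^ 2) := by
        have hsq : (L * (1 + t)) ^ 2 ≤ (A * Real.sqrt (1 + t ^ 2)) ^ 2 := by
          simp only [hq] at hqt; rw [mul_pow, mul_pow, hst2]; nlinarith
        have := Real.sqrt_le_sqrt hsq
        rwa [Real.sqrt_sq (by positivity), Real.sqrt_sq hnA] at this
      rw [sub_nonneg]
      have goal' : L / Real.sqrt (1 + t ^ 2) ≤ A / (1 + t) := by
        rw [div_le_div_iff₀ hst h1t]; linarith
      simpa [div_eq_mul_inv] using goal'
    · intro hqt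
      have hnA : 0 ≤ A * Real.sqrt (1 + t ^ 2) := mul_nonneg (hL.le.trans hAL) hst.le
      have key : A * Real.sqrt (1 + t ^ 2) ≤ L * (1 + t) := by
        have hsq : (A * Real.sqrt (1 + t ^ 2)) ^ 2 ≤ (L * (1 + t)) ^ 2 := by
          simp only [hq] at hqt; rw [mul_pow, mul_pow, hst2]; nlinarith
        have := Real.sqrt_le_sqrt hsq
        rwa [Real.sqrt_sq hnA, Real.sqrt_sq (by positivity)] at this
      rw [sub_nonpos]
      have goal' : A / (1 + t) ≤ L / Real.sqrt (1 + t ^ 2) := by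
        rw [div_le_div_iff₀ h1t hst]; linarith
      simpa [div_eq_mul_inv] using goal'
  have hFcont : ∀ t : ℝ, 0 ≤ t → ContinuousAt F t :=
    fun t ht => (hderiv t ht).continuousAt
  have hF0 : F 0 = 0 := by simp [hF]
  have hF1 : F 1 = 0 := by
    simp only [hF]
    rw [show (1:ℝ) + 1 = 2 by norm_num, ← hLdef, ← hAdef]
    ring
  have hmono : MonotoneOn F (Set.Icc (0:ℝ) c) := by
    apply monotoneOn_of_deriv_nonneg (convex_Icc 0 c)
    · exact fun t ht => (hFcont t ht.1).continuousWithinAt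
    · intro t ht
      rw [interior_Icc] at ht
      exact ((hderiv t ht.1.le).differentiableAt).differentiableWithinAt
    · intro t ht
      rw [interior_Icc] at ht
      refine (hsign t ht.1.le).1 ?_
      have := hqanti ⟨ht.1.le, ht.2.le.trans hc01.2⟩ hc01 ht.2.le
      linarith [hqc ▸ this]
  have hanti : AntitoneOn F (Set.Icc c 1) := by
    apply antitoneOn_of_deriv_nonpos (convex_Icc c 1)
    · exact fun t ht => (hFcont t (hc01.1.trans ht.1)).continuousWithinAt
    · intro t ht
      rw [interior_Icc] at ht
      exact ((hderiv t (hc01.1.trans ht.1.le)).differentiableAt).differentiableWithinAt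
    · intro t ht
      rw [interior_Icc] at ht
      refine (hsign t (hc01.1.trans ht.1.le)).2 ?_
      have := hqanti hc01 ⟨hc01.1.trans ht.1.le, ht.2.le⟩ ht.1.le
      linarith [hqc ▸ this]
  have hFw : 0 ≤ F w := by
    rcases le_total w c with hwc | hcw
    · have := hmono (Set.left_mem_Icc.2 hc01.1) ⟨h0, hwc⟩ h0
      linarith [hF0 ▸ this]
    · have := hanti ⟨hcw, h1⟩ (Set.right_mem_Icc.2 hc01.2) h1
      linarith [hF1 ▸ this]
  simp only [hF] at hFw
  linarith

lemma helperP (a s : ℝ) (ha : 0 < a) (has : a ≤ s) (hs1 : s ≤ 1) :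
    (a^2 + s^2) * (a + s^2 - s) ≤ a * s * (a + s^2) := by
  nlinarith [mul_nonneg (sq_nonneg a) (sub_nonneg.2 has),
    mul_nonneg (mul_nonneg (sq_nonneg a) (by linarith : (0:ℝ) ≤ s)) (sub_nonneg.2 hs1),
    mul_nonneg (mul_nonneg (sq_nonneg s) (sub_nonneg.2 hs1)) (sub_nonneg.2 has)]

lemma two_w_le (a s d : ℝ) (ha : 0 < a) (has : a ≤ s) (hs1 : s ≤ 1)
    (hs0 : 0 < s) (hd0 : 0 ≤ d) (hdab : a * d ≤ a^2 + s^2) :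
    d / s ≤ 1 + d / (a + s^2) := by
  have habpos : (0:ℝ) < a + s^2 := by positivity
  rw [div_le_iff₀ hs0, add_mul, one_mul, div_mul_eq_mul_div, ← sub_le_iff_le_add',
    le_div_iff₀ habpos]
  rcases le_or_gt (a + s^2 - s) 0 with hneg | hpos
  · have h1 : d * (a + s^2) ≤ d * s := mul_le_mul_of_nonneg_left (by linarith) hd0
    nlinarith [mul_pos hs0 habpos]
  · have h2 : (a*d) * (a + s^2 - s) ≤ (a^2 + s^2) * (a + s^2 - s) :=
      mul_le_mul_of_nonneg_right hdab hpos.le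
    nlinarith [helperP a s ha has hs1, h2]

lemma final_step (w u : ℝ) (hw0 : 0 ≤ w) (hwu : w ≤ u) (h2w : 2 * w ≤ 1 + u) :
    2 * Real.arsinh w ≤ 2 * Real.arsinh 1 / Real.log 2 * Real.log (1 + u) := by
  have hu0 : 0 ≤ u := le_trans hw0 hwu
  have hL : 0 < Real.log 2 := Real.log_pos one_lt_two
  have hAL : Real.log 2 ≤ Real.arsinh 1 := A_ge_L
  have hA0 : 0 ≤ Real.arsinh 1 := hL.le.trans hAL
  have hlogmono : Real.log (1 + w) ≤ Real.log (1 + u) :=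
    Real.log_le_log (by linarith) (by linarith)
  have hlogu0 : 0 ≤ Real.log (1 + u) := Real.log_nonneg (by linarith)
  rw [div_mul_eq_mul_div, le_div_iff₀ hL]
  rcases le_or_gt w 1 with hw1 | hw1
  · have hk := key_ineq w hw0 hw1
    nlinarith [mul_le_mul_of_nonneg_left hlogmono hA0]
  · have hu1 : (1:ℝ) ≤ u := by linarith
    have harsw : Real.arsinh w ≤ Real.arsinh 1 + Real.log w := by
      have hsq : Real.sqrt (1 + w ^ 2) ≤ Real.sqrt 2 * w := by
        rw [show Real.sqrt 2 * w = Real.sqrt (2 * w ^ 2) by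
          rw [Real.sqrt_mul (by norm_num), Real.sqrt_sq hw0]]
        exact Real.sqrt_le_sqrt (by nlinarith)
      have hs2pos : (0:ℝ) < 1 + Real.sqrt 2 := by positivity
      calc Real.arsinh w = Real.log (w + Real.sqrt (1 + w ^ 2)) := by rw [Real.arsinh]
        _ ≤ Real.log ((1 + Real.sqrt 2) * w) := by
            apply Real.log_le_log (by positivity)
            nlinarith
        _ = Real.log (1 + Real.sqrt 2) + Real.log w :=
            Real.log_mul hs2pos.ne' (by linarith)
        _ = Real.arsinh 1 + Real.log w := by rw [arsinh_one_eq]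
    have hlogw : Real.log w + Real.log 2 ≤ Real.log (1 + u) := by
      have h1 : Real.log (2 * w) ≤ Real.log (1 + u) :=
        Real.log_le_log (by linarith) (by linarith)
      rwa [Real.log_mul two_ne_zero (by linarith), add_comm] at h1
    have hY : Real.log 2 ≤ Real.log (1 + u) :=
      Real.log_le_log (by norm_num) (by linarith)
    nlinarith [mul_nonneg (sub_nonneg.2 hAL) (sub_nonneg.2 hY), harsw, hlogw, hL]

/-- For nonzero x, y ∈ ℝⁿ with |x| ≤ |y| and |x||y| ≤ 1,
arcosh(1 + |x−y|²/(2|x||y|)) ≤ (arcosh 3 / log 2) · log(1 + |x−y|/(|x| + |x||y|)). -/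
theorem arcosh_le_const_mul_log_of_norm (n : ℕ) (hn : 2 ≤ n) (x y : En n)
    (hx : x ≠ 0) (hy : y ≠ 0) (hxy : ‖x‖ ≤ ‖y‖) (hprod : ‖x‖ * ‖y‖ ≤ 1) :
    arcosh (1 + ‖x - y‖ ^ 2 / (2 * ‖x‖ * ‖y‖)) ≤
      (arcosh 3 / Real.log 2) * Real.log (1 + ‖x - y‖ / (‖x‖ + ‖x‖ * ‖y‖)) := by
  set a := ‖x‖ with hadef
  set b := ‖y‖ with hbdef
  set d := ‖x - y‖ with hddef
  have ha : 0 < a := norm_pos_iff.2 hx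
  have hb : 0 < b := norm_pos_iff.2 hy
  have hd0 : 0 ≤ d := norm_nonneg _
  have hdab : d ≤ a + b := norm_sub_le x y
  set s := Real.sqrt (a * b) with hsdef
  have hs0 : 0 < s := Real.sqrt_pos.2 (by positivity)
  have hs2 : s ^ 2 = a * b := Real.sq_sqrt (by positivity)
  have has : a ≤ s := by
    have h1 : a = Real.sqrt (a * a) := (Real.sqrt_mul_self ha.le).symm
    rw [h1, hsdef]
    exact Real.sqrt_le_sqrt (by nlinarith)
  have hsb : s ≤ b := by
    have h1 : b = Real.sqrt (b * b) := (Real.sqrt_mul_self hb.le).symm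
    rw [h1, hsdef]
    exact Real.sqrt_le_sqrt (by nlinarith)
  have hs1 : s ≤ 1 := by rw [hsdef]; exact Real.sqrt_le_one.mpr hprod
  set w := d / (2 * s) with hwdef
  set u := d / (a + a * b) with hudef
  have habpos : 0 < a + a * b := by positivity
  have hw0 : 0 ≤ w := by positivity
  have hu0 : 0 ≤ u := by positivity
  -- rewrite a + a*b as a + s^2
  have habs : a + a * b = a + s ^ 2 := by rw [hs2]
  have hwu : w ≤ u := by
    rw [hwdef, hudef, habs]
    apply div_le_div_of_nonneg_left hd0 (by positivity)
    nlinarith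
  have h2w : 2 * w ≤ 1 + u := by
    have hda : a * d ≤ a ^ 2 + s ^ 2 := by nlinarith
    have := two_w_le a s d ha has hs1 hs0 hd0 hda
    rw [hwdef, hudef, habs]
    calc 2 * (d / (2 * s)) = d / s := by field_simp
      _ ≤ 1 + d / (a + s ^ 2) := this
  -- rewrite LHS
  have hLHS : 1 + d ^ 2 / (2 * a * b) = 1 + 2 * w ^ 2 := by
    have hw2 : 2 * w ^ 2 = d ^ 2 / (2 * a * b) := by
      rw [hwdef, div_pow, mul_pow, hs2, mul_div_assoc',
        div_eq_div_iff (by positivity) (by positivity)]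
      ring
    linarith
  rw [hLHS, arcosh_eq_two_arsinh w hw0, arcosh_three_s12]
  exact final_step w u hw0 hwu h2w

end
end
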